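/- Let θ ∈ (0,1) and let f : 𝔻 → X₀ + X₁ be continuous on the closed unit disk, analytic in its interior, with f(1) = f(e^{i2πθ}) = 0, such that f restricted to the closed arc Γ̄₀ = {e^{it} : 2πθ ≤ t ≤ 2π} is X₀-valued continuous and f restricted to Γ̄₁ = {e^{it} : 0 ≤ t ≤ 2πθ} is X₁-valued continuous. Then ‖f(0)‖_{[X₀,X₁]_θ} ≤ (1/2π)(∫_{2πθ}^{2π} ‖f(e^{it})‖_{X₀} dt + ∫₀^{2πθ} ‖f(e^{it})‖_{X₁} dt). -/

import Mathlib

open Complex Set MeasureTheory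
open scoped Real

variable {X0 X1 E : Type*}
  [NormedAddCommGroup X0] [NormedSpace ℂ X0]
  [NormedAddCommGroup X1] [NormedSpace ℂ X1]
  [NormedAddCommGroup E] [NormedSpace ℂ E]

/-- The disk version `F_𝔻(X₀, X₁)` of Calderón's function space (for the parameter `θ`):
`f : 𝔻 → X₀ + X₁` continuous on the closed disk, analytic in its interior, vanishing at
`1` and `e^{2πθi}`, whose restriction to the closed arc `Γ̄ⱼ` is a continuous `Xⱼ`-valued
function (`Γ̄₀` parametrized by `t ∈ [2πθ, 2π]`, `Γ̄₁` by `t ∈ [0, 2πθ]`).  The Banach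
couple `(X₀, X₁)` is given by continuous injections `i0, i1` into the space `E` playing
the role of `X₀ + X₁`. -/
structure CalderonDiskFun (θ : ℝ) (i0 : X0 →L[ℂ] E) (i1 : X1 →L[ℂ] E) where
  toFun : ℂ → E
  g0 : ℝ → X0
  g1 : ℝ → X1
  cont : ContinuousOn toFun (Metric.closedBall (0:ℂ) 1)
  anal : DifferentiableOn ℂ toFun (Metric.ball (0:ℂ) 1)
  vanish_one : toFun 1 = 0
  vanish_theta : toFun (Complex.exp ((2 * π * θ : ℝ) * I)) = 0
  cont_g0 : ContinuousOn g0 (Icc (2 * π * θ) (2 * π))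
  cont_g1 : ContinuousOn g1 (Icc 0 (2 * π * θ))
  eq_g0 : ∀ t ∈ Icc (2 * π * θ) (2 * π), i0 (g0 t) = toFun (Complex.exp ((t:ℝ) * I))
  eq_g1 : ∀ t ∈ Icc (0:ℝ) (2 * π * θ), i1 (g1 t) = toFun (Complex.exp ((t:ℝ) * I))

/-- The norm `‖f‖_{F_𝔻} = max (sup_{Γ₀} ‖f‖_{X₀}, sup_{Γ₁} ‖f‖_{X₁})`. -/
noncomputable def CalderonDiskFun.norm {θ : ℝ} {i0 : X0 →L[ℂ] E} {i1 : X1 →L[ℂ] E}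
    (f : CalderonDiskFun θ i0 i1) : ℝ :=
  max (sSup ((fun t => ‖f.g0 t‖) '' Icc (2 * π * θ) (2 * π)))
    (sSup ((fun t => ‖f.g1 t‖) '' Icc 0 (2 * π * θ)))

/-- The norm of the complex interpolation space `[X₀, X₁]_θ` (in its disk description):
`‖x‖_θ = inf {‖f‖_{F_𝔻} : f ∈ F_𝔻(X₀,X₁), f(0) = x}`. -/
noncomputable def interpNorm (θ : ℝ) (i0 : X0 →L[ℂ] E) (i1 : X1 →L[ℂ] E) (x : E) : ℝ :=
  sInf {r | ∃ f : CalderonDiskFun θ i0 i1, f.toFun 0 = x ∧ r = f.norm}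

noncomputable def apolyCoef (c : ℤ →₀ ℂ) (n : ℤ) : ℂ :=
  if 0 < n then c n else if n = 0 then ((c 0).re : ℂ) else (starRingEnd ℂ) (c n)

noncomputable def apoly (c : ℤ →₀ ℂ) (z : ℂ) : ℂ :=
  ∑ n ∈ c.support, apolyCoef c n * z ^ n.natAbs

lemma apoly_zero (c : ℤ →₀ ℂ) : apoly c 0 = ((c 0).re : ℂ) := by
  unfold apoly
  by_cases h0 : (0:ℤ) ∈ c.support
  · rw [Finset.sum_eq_single 0]
    · simp [apolyCoef]
    · intro b _ hb
      simp [Int.natAbs_eq_zero.not.mpr hb, zero_pow, Int.natAbs_eq_zero, hb]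
    · intro h; exact absurd h0 h
  · rw [Finset.sum_eq_zero]
    · have : c 0 = 0 := Finsupp.notMem_support_iff.mp h0
      simp [this]
    · intro b hb
      have hb0 : b ≠ 0 := by rintro rfl; exact h0 hb
      simp [Int.natAbs_eq_zero, hb0]

lemma apoly_differentiable (c : ℤ →₀ ℂ) : Differentiable ℂ (apoly c) := by
  unfold apoly
  exact Differentiable.fun_sum fun n _ => (differentiable_const _).mul (differentiable_pow _)

lemma apoly_continuous (c : ℤ →₀ ℂ) : Continuous (apoly c) :=
  (apoly_differentiable c).continuous

lemma apoly_boundary_re (c : ℤ →₀ ℂ) (t : ℝ) :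
    (apoly c (Complex.exp ((t:ℝ) * I))).re
      = (∑ n ∈ c.support, c n * Complex.exp ((n:ℂ) * t * I)).re := by
  unfold apoly
  rw [Complex.re_sum, Complex.re_sum]
  refine Finset.sum_congr rfl fun n _ => ?_
  rw [← Complex.exp_nat_mul]
  rcases lt_trichotomy 0 n with hn | hn | hn
  · simp only [apolyCoef, if_pos hn]
    congr 2
    have h1 : (n.natAbs : ℤ) = n := Int.natAbs_of_nonneg hn.le
    have : ((n.natAbs : ℂ)) = (n : ℂ) := by rw [← Int.cast_natCast (R := ℂ), h1]
    rw [this]; ring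
  · subst hn; simp [apolyCoef]
  · simp only [apolyCoef, if_neg (not_lt.mpr hn.le), if_neg hn.ne]
    have h0 : (n.natAbs : ℤ) = -n := Int.ofNat_natAbs_of_nonpos hn.le
    have h1 : ((n.natAbs : ℂ)) = -(n : ℂ) := by
      rw [← Int.cast_natCast (R := ℂ), h0, Int.cast_neg]
    rw [h1]
    have hc : (starRingEnd ℂ) ((n:ℂ) * t * I) = -(n:ℂ) * ((t:ℂ) * I) := by
      rw [map_mul, map_mul, Complex.conj_I, Complex.conj_ofReal, map_intCast]; ring
    have : (starRingEnd ℂ) (c n) * Complex.exp (-(n:ℂ) * ((t:ℂ) * I))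
        = (starRingEnd ℂ) (c n * Complex.exp ((n:ℂ) * t * I)) := by
      rw [map_mul, ← Complex.exp_conj, hc]
    rw [this, Complex.conj_re]

lemma exp_int_integral (n : ℤ) (hn : n ≠ 0) :
    (∫ t in (0:ℝ)..(2*π), Complex.exp ((n:ℂ) * t * I)) = 0 := by
  have h1 : ∀ t : ℝ, (n:ℂ) * t * I = ((n:ℂ) * I) * t := fun t => by ring
  simp_rw [h1]
  rw [integral_exp_mul_complex (by simp [hn, Complex.I_ne_zero])]
  have h2 : (n:ℂ) * I * (2*π:ℝ) = (n:ℂ) * (2 * π * I) := by push_cast; ring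
  rw [h2, Complex.exp_int_mul_two_pi_mul_I]
  simp

lemma apoly_mean (c : ℤ →₀ ℂ) :
    (∫ t in (0:ℝ)..(2*π), (∑ n ∈ c.support, c n * Complex.exp ((n:ℂ) * t * I)).re)
      = 2 * π * (c 0).re := by
  have hcont : ∀ n : ℤ, Continuous fun t : ℝ => c n * Complex.exp ((n:ℂ) * t * I) :=
    fun n => continuous_const.mul (Complex.continuous_exp.comp (by fun_prop))
  have hint : ∀ n : ℤ, IntervalIntegrable (fun t : ℝ => c n * Complex.exp ((n:ℂ) * t * I))
      volume 0 (2*π) := fun n => (hcont n).intervalIntegrable _ _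
  have hintS : IntervalIntegrable (fun t : ℝ => ∑ n ∈ c.support, c n * Complex.exp ((n:ℂ) * t * I))
      volume 0 (2*π) := (continuous_finset_sum _ fun n _ => hcont n).intervalIntegrable _ _
  have := Complex.reCLM.intervalIntegral_comp_comm (μ := volume) (a := 0) (b := 2*π) hintS
  simp only [Complex.reCLM_apply] at this
  rw [this, intervalIntegral.integral_finset_sum (fun n _ => hint n)]
  have hterm : ∀ n ∈ c.support,
      (∫ t in (0:ℝ)..(2*π), c n * Complex.exp ((n:ℂ) * t * I))
        = if n = 0 then c 0 * (2*π:ℝ) else 0 := by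
    intro n _
    rw [intervalIntegral.integral_const_mul]
    by_cases hn : n = 0
    · subst hn
      simp
    · rw [exp_int_integral n hn, if_neg hn, mul_zero]
  rw [Finset.sum_congr rfl hterm, Finset.sum_ite_eq' c.support 0 (fun _ => c 0 * (2*π:ℝ))]
  by_cases h0 : (0:ℤ) ∈ c.support
  · rw [if_pos h0]
    rw [mul_comm (c 0), Complex.re_ofReal_mul]
  · rw [if_neg h0]
    have : c 0 = 0 := Finsupp.notMem_support_iff.mp h0
    simp [this]

set_option maxHeartbeats 2000000 in
/-- Lemma `gie`: for every `f ∈ F_𝔻(X₀, X₁)`,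
`‖f(0)‖_{[X₀,X₁]_θ} ≤ (1/2π) (∫_{2πθ}^{2π} ‖f(e^{it})‖_{X₀} dt + ∫_0^{2πθ} ‖f(e^{it})‖_{X₁} dt)`. -/
theorem calderon_disk_lemma
    [CompleteSpace X0] [CompleteSpace X1] [CompleteSpace E]
    (θ : ℝ) (hθ : θ ∈ Ioo (0:ℝ) 1)
    (i0 : X0 →L[ℂ] E) (i1 : X1 →L[ℂ] E)
    (hi0 : Function.Injective i0) (hi1 : Function.Injective i1)
    (hreg0 : Dense {x : X0 | ∃ y : X1, i0 x = i1 y})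
    (hreg1 : Dense {y : X1 | ∃ x : X0, i0 x = i1 y})
    (f : CalderonDiskFun θ i0 i1) :
    interpNorm θ i0 i1 (f.toFun 0) ≤
      (1 / (2 * π)) * ((∫ t in (2 * π * θ)..(2 * π), ‖f.g0 t‖) +
        ∫ t in (0:ℝ)..(2 * π * θ), ‖f.g1 t‖) := by
  obtain ⟨hθ0, hθ1⟩ := hθ
  have hπ : (0:ℝ) < π := Real.pi_pos
  have ha0 : 0 < 2 * π * θ := by positivity
  have ha2 : 2 * π * θ < 2 * π := by nlinarith
  -- endpoint values vanish
  have hexp0 : Complex.exp (((0:ℝ):ℂ) * I) = 1 := by norm_num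
  have hexp2π : Complex.exp ((((2*π):ℝ):ℂ) * I) = 1 := by
    rw [show ((((2*π):ℝ):ℂ) * I) = 2 * π * I by push_cast; ring, Complex.exp_two_pi_mul_I]
  have hg1_0 : f.g1 0 = 0 :=
    hi1 (by rw [f.eq_g1 0 ⟨le_rfl, ha0.le⟩, hexp0, f.vanish_one, map_zero])
  have hg0_2π : f.g0 (2*π) = 0 :=
    hi0 (by rw [f.eq_g0 (2*π) ⟨ha2.le, le_rfl⟩, hexp2π, f.vanish_one, map_zero])
  have hg0_a : f.g0 (2*π*θ) = 0 :=
    hi0 (by rw [f.eq_g0 (2*π*θ) ⟨le_rfl, ha2.le⟩, f.vanish_theta, map_zero])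
  have hg1_a : f.g1 (2*π*θ) = 0 :=
    hi1 (by rw [f.eq_g1 (2*π*θ) ⟨ha0.le, le_rfl⟩, f.vanish_theta, map_zero])
  -- the boundary norm function h
  set h : ℝ → ℝ := fun t => ‖f.g1 (min t (2*π*θ))‖ + ‖f.g0 (max t (2*π*θ))‖ with hh_def
  have hmin : MapsTo (fun t => min t (2*π*θ)) (Icc (0:ℝ) (2*π)) (Icc (0:ℝ) (2*π*θ)) :=
    fun t ht => ⟨le_min ht.1 ha0.le, min_le_right _ _⟩
  have hmax : MapsTo (fun t => max t (2*π*θ)) (Icc (0:ℝ) (2*π)) (Icc (2*π*θ) (2*π)) :=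
    fun t ht => ⟨le_max_right _ _, max_le ht.2 ha2.le⟩
  have hhcont : ContinuousOn h (Icc 0 (2*π)) := by
    apply ContinuousOn.add
    · exact (f.cont_g1.comp ((continuous_id.min continuous_const).continuousOn) hmin).norm
    · exact (f.cont_g0.comp ((continuous_id.max continuous_const).continuousOn) hmax).norm
  have h_eq0 : ∀ t ∈ Icc (2*π*θ) (2*π), h t = ‖f.g0 t‖ := by
    intro t ht
    simp only [hh_def]
    rw [min_eq_right ht.1, max_eq_left ht.1, hg1_a, norm_zero, zero_add]
  have h_eq1 : ∀ t ∈ Icc (0:ℝ) (2*π*θ), h t = ‖f.g1 t‖ := by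
    intro t ht
    simp only [hh_def]
    rw [min_eq_left ht.2, max_eq_right ht.2, hg0_a, norm_zero, add_zero]
  have h_nonneg : ∀ t, 0 ≤ h t := fun t => add_nonneg (norm_nonneg _) (norm_nonneg _)
  have h02 : h 0 = h (2*π) := by
    simp only [hh_def]
    rw [min_eq_left ha0.le, max_eq_right ha0.le, min_eq_right ha2.le, max_eq_left ha2.le]
    rw [hg1_0, hg1_a, hg0_a, hg0_2π]
  -- integrability and the integral identity
  have hint_h : ∀ b c : ℝ, b ∈ Icc (0:ℝ) (2*π) → c ∈ Icc (0:ℝ) (2*π) →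
      IntervalIntegrable h volume b c := by
    intro b c hb hc
    apply ContinuousOn.intervalIntegrable
    exact hhcont.mono (uIcc_subset_Icc hb hc)
  have hmem02 : (0:ℝ) ∈ Icc (0:ℝ) (2*π) := ⟨le_rfl, by positivity⟩
  have hmema : (2*π*θ) ∈ Icc (0:ℝ) (2*π) := ⟨ha0.le, ha2.le⟩
  have hmem2π : (2*π) ∈ Icc (0:ℝ) (2*π) := ⟨by positivity, le_rfl⟩
  have hIeq : (∫ t in (0:ℝ)..(2*π), h t)
      = (∫ t in (2*π*θ)..(2*π), ‖f.g0 t‖) + ∫ t in (0:ℝ)..(2*π*θ), ‖f.g1 t‖ := by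
    rw [← intervalIntegral.integral_add_adjacent_intervals
      (hint_h 0 (2*π*θ) hmem02 hmema) (hint_h (2*π*θ) (2*π) hmema hmem2π)]
    rw [intervalIntegral.integral_congr (a := (0:ℝ)) (b := 2*π*θ) (g := fun t => ‖f.g1 t‖)
        (by rw [uIcc_of_le ha0.le]; exact h_eq1),
      intervalIntegral.integral_congr (a := 2*π*θ) (b := 2*π) (g := fun t => ‖f.g0 t‖)
        (by rw [uIcc_of_le ha2.le]; exact h_eq0)]
    ring
  set K := (1 / (2 * π)) * ((∫ t in (2 * π * θ)..(2 * π), ‖f.g0 t‖) +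
      ∫ t in (0:ℝ)..(2 * π * θ), ‖f.g1 t‖) with hK_def
  have hK2π : (∫ t in (0:ℝ)..(2*π), h t) = 2*π*K := by
    rw [hK_def, hIeq]; field_simp
  -- the key quantitative estimate
  have key : ∀ ε > (0:ℝ), ∀ ρ > (0:ℝ),
      interpNorm θ i0 i1 (f.toFun 0) ≤ Real.exp (2*ε) * (K + ρ) := by
    intro ε hε ρ hρ
    haveI : Fact ((0:ℝ) < 2*π) := ⟨by positivity⟩
    set u : ℝ → ℝ := fun t => Real.log (h t + ρ) with hu_def
    have hpos : ∀ t, 0 < h t + ρ := fun t => by have := h_nonneg t; positivity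
    have hucont : ContinuousOn u (Icc 0 (2*π)) :=
      (hhcont.add continuousOn_const).log (fun t _ => (hpos t).ne')
    have hu02 : u 0 = u (2*π) := by simp only [hu_def, h02]
    set U : C(AddCircle (2*π), ℂ) :=
      ⟨fun x => ((AddCircle.liftIco (2*π) 0 u x : ℝ) : ℂ),
        Complex.continuous_ofReal.comp (AddCircle.liftIco_zero_continuous hu02 hucont)⟩
      with hU_def
    have hUval : ∀ t ∈ Icc (0:ℝ) (2*π), U ((t : ℝ) : AddCircle (2*π)) = ((u t : ℝ) : ℂ) := by
      intro t ht
      rcases eq_or_lt_of_le ht.2 with heq | hlt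
      · have hcoe : ((t : ℝ) : AddCircle (2*π)) = (((0:ℝ) : ℝ) : AddCircle (2*π)) := by
          rw [heq]
          exact_mod_cast (AddCircle.coe_period (p := 2*π)).trans
            (by norm_num : (0 : AddCircle (2*π)) = ((0:ℝ) : AddCircle (2*π)))
        rw [hcoe]
        show ((AddCircle.liftIco (2*π) 0 u _ : ℝ) : ℂ) = _
        rw [AddCircle.liftIco_zero_coe_apply ⟨le_rfl, by positivity⟩]
        rw [hu02, heq]
      · show ((AddCircle.liftIco (2*π) 0 u _ : ℝ) : ℂ) = _
        rw [AddCircle.liftIco_zero_coe_apply ⟨ht.1, hlt⟩]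
    -- density of trigonometric polynomials
    have hUmem : U ∈ closure ((Submodule.span ℂ (Set.range (@fourier (2*π)))) : Set _) := by
      have := span_fourier_closure_eq_top (T := 2*π)
      have h2 : U ∈ (Submodule.span ℂ (Set.range (@fourier (2*π)))).topologicalClosure := by
        rw [this]; trivial
      exact h2
    obtain ⟨q, hqmem, hqdist⟩ := Metric.mem_closure_iff.mp hUmem ε hε
    obtain ⟨c, hc⟩ := Finsupp.mem_span_range_iff_exists_finsupp.mp hqmem
    have hπC : ((π:ℝ) : ℂ) ≠ 0 := by exact_mod_cast hπ.ne'
    have hqval : ∀ t : ℝ, q ((t:ℝ) : AddCircle (2*π))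
        = ∑ n ∈ c.support, c n * Complex.exp ((n:ℂ) * t * I) := by
      intro t
      rw [← hc, Finsupp.sum]
      simp only [ContinuousMap.coe_sum, Finset.sum_apply, ContinuousMap.coe_smul,
        Pi.smul_apply, smul_eq_mul]
      refine Finset.sum_congr rfl fun n _ => ?_
      rw [fourier_coe_apply]
      refine congrArg (fun w => c n * Complex.exp w) ?_
      rw [div_eq_iff (by push_cast; simp [hπC] : ((2*π:ℝ):ℂ) ≠ 0)]
      push_cast
      ring
    set p : ℝ → ℝ := fun t => (∑ n ∈ c.support, c n * Complex.exp ((n:ℂ) * t * I)).re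
      with hp_def
    have hp : ∀ t ∈ Icc (0:ℝ) (2*π), |p t - u t| ≤ ε := by
      intro t ht
      have h1 : p t - u t = (q ((t:ℝ) : AddCircle (2*π)) - U ((t:ℝ) : AddCircle (2*π))).re := by
        rw [Complex.sub_re, hqval t, hUval t ht, Complex.ofReal_re]
      rw [h1]
      refine (Complex.abs_re_le_norm _).trans ?_
      rw [← Complex.dist_eq]
      exact (ContinuousMap.dist_apply_le_dist _).trans (by rw [dist_comm]; exact hqdist.le)
    -- means
    set A := (c 0).re with hA_def
    have hpmean : (∫ t in (0:ℝ)..(2*π), p t) = 2*π*A := apoly_mean c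
    have hpcont : Continuous p :=
      Complex.continuous_re.comp (continuous_finset_sum _ fun n _ =>
        continuous_const.mul (Complex.continuous_exp.comp (by fun_prop)))
    have hintu : IntervalIntegrable u volume 0 (2*π) := by
      apply ContinuousOn.intervalIntegrable
      rwa [uIcc_of_le (by positivity : (0:ℝ) ≤ 2*π)]
    have hinth : IntervalIntegrable h volume 0 (2*π) := hint_h 0 (2*π) hmem02 hmem2π
    set m := (1/(2*π)) * ∫ t in (0:ℝ)..(2*π), u t with hm_def
    have hu2π : (∫ t in (0:ℝ)..(2*π), u t) = 2*π*m := by rw [hm_def]; field_simp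
    have hAm : A ≤ m + ε := by
      have hle : (∫ t in (0:ℝ)..(2*π), p t) ≤ ∫ t in (0:ℝ)..(2*π), (u t + ε) := by
        apply intervalIntegral.integral_mono_on (by positivity)
          (hpcont.intervalIntegrable _ _) (hintu.add intervalIntegrable_const)
        intro t ht
        have := hp t ht
        have := abs_le.mp this
        linarith [this.1]
      rw [hpmean, intervalIntegral.integral_add hintu intervalIntegrable_const,
        intervalIntegral.integral_const, hu2π] at hle
      simp only [smul_eq_mul, sub_zero] at hle
      nlinarith
    -- Jensen via the tangent line of exp at m
    have hJ : Real.exp m ≤ K + ρ := by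
      have hpt : ∀ t ∈ Icc (0:ℝ) (2*π),
          Real.exp m * (u t + (1 - m)) ≤ h t + ρ := by
        intro t ht
        have h5 : Real.exp (u t) = h t + ρ := Real.exp_log (hpos t)
        have h6 := Real.add_one_le_exp (u t - m)
        have h7 : Real.exp m * (u t - m + 1) ≤ Real.exp m * Real.exp (u t - m) :=
          mul_le_mul_of_nonneg_left h6 (Real.exp_pos m).le
        rw [← Real.exp_add] at h7
        rw [show m + (u t - m) = u t by ring] at h7
        rw [h5] at h7
        calc Real.exp m * (u t + (1 - m)) = Real.exp m * (u t - m + 1) := by ring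
        _ ≤ h t + ρ := h7
      have hmono := intervalIntegral.integral_mono_on (by positivity : (0:ℝ) ≤ 2*π)
        ((hintu.add intervalIntegrable_const).const_mul (Real.exp m))
        (hinth.add intervalIntegrable_const) hpt
      rw [intervalIntegral.integral_const_mul,
        intervalIntegral.integral_add hintu intervalIntegrable_const,
        intervalIntegral.integral_const, hu2π,
        intervalIntegral.integral_add hinth intervalIntegrable_const,
        intervalIntegral.integral_const, hK2π] at hmono
      simp only [smul_eq_mul, sub_zero] at hmono
      nlinarith [Real.exp_pos m]
    -- the competitor function
    set Q := apoly c with hQ_def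
    set φ : ℂ → ℂ := fun z => Complex.exp (Q 0 - Q z) with hφ_def
    have hφcont : Continuous φ :=
      Complex.continuous_exp.comp (continuous_const.sub (apoly_continuous c))
    have hφdiff : Differentiable ℂ φ :=
      Complex.differentiable_exp.comp ((differentiable_const _).sub (apoly_differentiable c))
    have hbcont : Continuous fun t : ℝ => φ (Complex.exp ((t:ℝ) * I)) :=
      hφcont.comp (Complex.continuous_exp.comp (by fun_prop))
    set g : CalderonDiskFun θ i0 i1 :=
      { toFun := fun z => φ z • f.toFun z
        g0 := fun t => φ (Complex.exp ((t:ℝ) * I)) • f.g0 t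
        g1 := fun t => φ (Complex.exp ((t:ℝ) * I)) • f.g1 t
        cont := hφcont.continuousOn.smul f.cont
        anal := hφdiff.differentiableOn.smul f.anal
        vanish_one := by
          show φ 1 • f.toFun 1 = 0
          rw [f.vanish_one, smul_zero]
        vanish_theta := by
          show φ _ • f.toFun (Complex.exp ((2 * π * θ : ℝ) * I)) = 0
          rw [f.vanish_theta, smul_zero]
        cont_g0 := hbcont.continuousOn.smul f.cont_g0
        cont_g1 := hbcont.continuousOn.smul f.cont_g1
        eq_g0 := fun t ht => by
          show i0 (φ (Complex.exp ((t:ℝ) * I)) • f.g0 t)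
            = φ (Complex.exp ((t:ℝ) * I)) • f.toFun (Complex.exp ((t:ℝ) * I))
          rw [_root_.map_smul, f.eq_g0 t ht]
        eq_g1 := fun t ht => by
          show i1 (φ (Complex.exp ((t:ℝ) * I)) • f.g1 t)
            = φ (Complex.exp ((t:ℝ) * I)) • f.toFun (Complex.exp ((t:ℝ) * I))
          rw [_root_.map_smul, f.eq_g1 t ht] } with hg_def
    have hg00 : g.toFun 0 = f.toFun 0 := by
      show φ 0 • f.toFun 0 = f.toFun 0
      rw [hφ_def]
      simp only [sub_self, Complex.exp_zero, one_smul]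
    -- the norm of φ on the boundary
    have hφnorm : ∀ t : ℝ, ‖φ (Complex.exp ((t:ℝ) * I))‖ = Real.exp (A - p t) := by
      intro t
      rw [hφ_def]
      simp only [Complex.norm_exp]
      congr 1
      rw [Complex.sub_re, hQ_def, apoly_zero, Complex.ofReal_re, apoly_boundary_re]
    -- the core pointwise bound
    have hcore : ∀ t ∈ Icc (0:ℝ) (2*π),
        Real.exp (A - p t) * h t ≤ Real.exp (A + ε) := by
      intro t ht
      have h1 : u t - ε ≤ p t := by
        have := abs_le.mp (hp t ht); linarith [this.2]
      have h2 : Real.exp (A - p t) * h t ≤ Real.exp (A + ε - u t) * h t :=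
        mul_le_mul_of_nonneg_right (Real.exp_le_exp.mpr (by linarith)) (h_nonneg t)
      refine h2.trans ?_
      rw [Real.exp_sub, div_mul_eq_mul_div, div_le_iff₀ (Real.exp_pos _),
        Real.exp_log (hpos t)]
      nlinarith [Real.exp_pos (A + ε), h_nonneg t]
    -- the norm of g is at most exp (A + ε)
    have hgnorm : g.norm ≤ Real.exp (A + ε) := by
      apply max_le
      · apply Real.sSup_le _ (Real.exp_pos _).le
        rintro x ⟨t, ht, rfl⟩
        show ‖φ (Complex.exp ((t:ℝ) * I)) • f.g0 t‖ ≤ _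
        rw [norm_smul, hφnorm t, ← h_eq0 t ht]
        exact hcore t ⟨ha0.le.trans ht.1, ht.2⟩
      · apply Real.sSup_le _ (Real.exp_pos _).le
        rintro x ⟨t, ht, rfl⟩
        show ‖φ (Complex.exp ((t:ℝ) * I)) • f.g1 t‖ ≤ _
        rw [norm_smul, hφnorm t, ← h_eq1 t ht]
        exact hcore t ⟨ht.1, ht.2.trans ha2.le⟩
    -- conclude
    have hbdd : BddBelow {r | ∃ f' : CalderonDiskFun θ i0 i1,
        f'.toFun 0 = f.toFun 0 ∧ r = f'.norm} := by
      refine ⟨0, ?_⟩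
      rintro r ⟨f', -, rfl⟩
      refine le_trans ?_ (le_max_left _ _)
      apply Real.sSup_nonneg
      rintro x ⟨t, -, rfl⟩
      exact norm_nonneg _
    have hle := csInf_le hbdd ⟨g, hg00, rfl⟩
    refine hle.trans (hgnorm.trans ?_)
    have : A + ε ≤ m + 2*ε := by linarith
    calc Real.exp (A + ε) ≤ Real.exp (m + 2*ε) := Real.exp_le_exp.mpr this
    _ = Real.exp (2*ε) * Real.exp m := by rw [← Real.exp_add]; ring_nf
    _ ≤ Real.exp (2*ε) * (K + ρ) := mul_le_mul_of_nonneg_left hJ (Real.exp_pos _).le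
  -- pass to the limit
  have htend : Filter.Tendsto (fun n : ℕ => Real.exp (2 * (1/(n+1))) * (K + 1/(n+1)))
      Filter.atTop (nhds K) := by
    have h1 : Filter.Tendsto (fun n : ℕ => (1:ℝ)/(n+1)) Filter.atTop (nhds 0) :=
      tendsto_one_div_add_atTop_nhds_zero_nat
    have h3 : Filter.Tendsto (fun n : ℕ => Real.exp (2 * (1/(n+1)))) Filter.atTop
        (nhds (Real.exp (2*0))) := (Real.continuous_exp.tendsto ((2:ℝ)*0)).comp (h1.const_mul (2:ℝ))
    have h2 := h3.mul ((tendsto_const_nhds (x := K) (f := Filter.atTop (α := ℕ))).add h1)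
    simp only [mul_zero, Real.exp_zero, add_zero, one_mul] at h2
    exact h2
  exact ge_of_tendsto htend (Filter.Eventually.of_forall fun n =>
    key _ (by positivity) _ (by positivity))
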